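/- Farkas' Lemma (unsatisfiability direction): A system Φ of linear inequalities a_{i,0} + a_{i,1}·x_1 + … + a_{i,r}·x_r ≥ 0 (i = 1,…,m) over ℝ^r is unsatisfiable if and only if there exist non-negative reals y_0, y_1, …, y_m such that the constant term satisfies -1 = y_0 + Σ_{i=1}^m y_i·a_{i,0} and 0 = Σ_{i=1}^m y_i·a_{i,j} for each variable index 1 ≤ j ≤ r. -/

import Mathlib

open Finset

section Cone

variable {E : Type*} [NormedAddCommGroup E] [NormedSpace ℝ E]

def coneSet {n : ℕ} (v : Fin n → E) : Set E :=
  {x | ∃ c : Fin n → ℝ, (∀ i, 0 ≤ c i) ∧ x = ∑ i, c i • v i}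

lemma zero_mem_coneSet {n : ℕ} (v : Fin n → E) : (0 : E) ∈ coneSet v :=
  ⟨0, fun _ => le_refl 0, by simp⟩

lemma generator_mem_coneSet {n : ℕ} (v : Fin n → E) (i : Fin n) : v i ∈ coneSet v := by
  refine ⟨fun j => if j = i then 1 else 0, fun j => by positivity, ?_⟩
  simp [ite_smul]

lemma coneSet_key {n : ℕ} (v : Fin (n + 1) → E) (g : Fin (n + 1) → ℝ)
    (hg : ∑ i, g i • v i = 0) (hpos : ∃ i, 0 < g i) :
    coneSet v ⊆ ⋃ p : Fin (n + 1), coneSet (v ∘ p.succAbove) := by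
  rintro x ⟨c, hc, rfl⟩
  obtain ⟨i₁, hi₁⟩ := hpos
  have hSne : (univ.filter (fun i => 0 < g i)).Nonempty := ⟨i₁, by simp [hi₁]⟩
  obtain ⟨p, hpS, hmin⟩ := Finset.exists_min_image _ (fun i => c i / g i) hSne
  simp only [mem_filter, mem_univ, true_and] at hpS
  set t := c p / g p with ht
  have ht0 : 0 ≤ t := div_nonneg (hc p) hpS.le
  set c' := fun i => c i - t * g i with hc'
  have hc'0 : ∀ i, 0 ≤ c' i := by
    intro i
    by_cases hgi : 0 < g i
    · have := hmin i (by simp [hgi])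
      have : t * g i ≤ c i := (le_div_iff₀ hgi).mp this
      simpa [c'] using this
    · push_neg at hgi
      have : t * g i ≤ 0 := mul_nonpos_of_nonneg_of_nonpos ht0 hgi
      have := sub_nonneg.mpr (this.trans (hc i))
      simpa [c'] using this
  have hcp : c' p = 0 := by
    simp [c', ht, div_mul_cancel₀ _ (ne_of_gt hpS)]
  have hsum : ∑ i, c' i • v i = ∑ i, c i • v i := by
    simp only [c', sub_smul, Finset.sum_sub_distrib, mul_smul]
    rw [← Finset.smul_sum, hg, smul_zero, sub_zero]
  refine Set.mem_iUnion.mpr ⟨p, fun k => c' (p.succAbove k), fun k => hc'0 _, ?_⟩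
  rw [← hsum, Fin.sum_univ_succAbove _ p, hcp, zero_smul, zero_add]
  rfl

lemma coneSet_closed [FiniteDimensional ℝ E] :
    ∀ (n : ℕ) (v : Fin n → E), IsClosed (coneSet v) := by
  intro n
  induction n with
  | zero =>
    intro v
    have : coneSet v = {(0 : E)} := by
      ext x; simp [coneSet, eq_comm]
    rw [this]; exact isClosed_singleton
  | succ n ih =>
    intro v
    by_cases hv : LinearIndependent ℝ v
    · set L := LinearMap.lsum ℝ (fun _ : Fin (n + 1) => ℝ) ℕ
        (fun i => LinearMap.id.smulRight (v i)) with hL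
      have hker : LinearMap.ker L = ⊥ := Fintype.linearIndependent_iff'.mp hv
      have hce : Topology.IsClosedEmbedding L := L.isClosedEmbedding_of_injective hker
      have hLc : ∀ c : Fin (n + 1) → ℝ, L c = ∑ i, c i • v i := by
        intro c; simp [hL]
      have himg : coneSet v = L '' {c | ∀ i, 0 ≤ c i} := by
        ext x
        constructor
        · rintro ⟨c, hc, rfl⟩
          exact ⟨c, hc, hLc c⟩
        · rintro ⟨c, hc, rfl⟩
          exact ⟨c, hc, hLc c⟩
      rw [himg]
      apply hce.isClosedMap
      have : {c : Fin (n + 1) → ℝ | ∀ i, 0 ≤ c i} = ⋂ i, {c | 0 ≤ c i} := by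
        ext c; simp [Set.mem_iInter]
      rw [this]
      exact isClosed_iInter fun i => isClosed_le continuous_const (continuous_apply i)
    · obtain ⟨g, hg, i₀, hgi⟩ := Fintype.not_linearIndependent_iff.mp hv
      have hsub : coneSet v ⊆ ⋃ p : Fin (n + 1), coneSet (v ∘ p.succAbove) := by
        rcases lt_or_gt_of_ne hgi with h | h
        · apply coneSet_key v (-g)
          · simp [hg]
          · exact ⟨i₀, by simpa using h⟩
        · exact coneSet_key v g hg ⟨i₀, h⟩
      have hsup : (⋃ p : Fin (n + 1), coneSet (v ∘ p.succAbove)) ⊆ coneSet v := by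
        rintro x hx
        obtain ⟨p, c, hc, rfl⟩ := Set.mem_iUnion.mp hx
        refine ⟨p.insertNth 0 c, ?_, ?_⟩
        · intro j
          refine Fin.succAboveCases p ?_ ?_ j
          · simp
          · intro k; simpa using hc k
        · rw [Fin.sum_univ_succAbove _ p]
          simp
      have heq : coneSet v = ⋃ p : Fin (n + 1), coneSet (v ∘ p.succAbove) :=
        le_antisymm hsub hsup
      rw [heq]
      exact isClosed_iUnion_of_finite fun p => ih _

end Cone

open scoped InnerProductSpace

lemma coneSet_separation {N n : ℕ} (v : Fin n → EuclideanSpace ℝ (Fin N))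
    {b : EuclideanSpace ℝ (Fin N)} (hb : b ∉ coneSet v) :
    ∃ y : EuclideanSpace ℝ (Fin N), (∀ i, 0 ≤ ⟪v i, y⟫_ℝ) ∧ ⟪y, b⟫_ℝ < 0 := by
  let K : ConvexCone ℝ (EuclideanSpace ℝ (Fin N)) :=
    { carrier := coneSet v
      smul_mem' := by
        rintro t ht x ⟨c, hc, rfl⟩
        exact ⟨fun i => t * c i, fun i => mul_nonneg ht.le (hc i), by
          simp [Finset.smul_sum, mul_smul]⟩
      add_mem' := by
        rintro x ⟨c, hc, rfl⟩ z ⟨d, hd, rfl⟩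
        exact ⟨fun i => c i + d i, fun i => add_nonneg (hc i) (hd i), by
          simp [add_smul, Finset.sum_add_distrib]⟩ }
  let P : ProperCone ℝ (EuclideanSpace ℝ (Fin N)) :=
    ⟨K.toPointedCone (zero_mem_coneSet v), coneSet_closed n v⟩
  obtain ⟨y, h1, h2⟩ := P.hyperplane_separation' (x₀ := b) hb
  exact ⟨y, fun i => h1 _ (generator_mem_coneSet v i), by rw [real_inner_comm]; exact h2⟩

/-- Farkas' Lemma (unsatisfiability direction). -/
theorem farkas_unsat (r m : ℕ) (a : Fin m → Fin r → ℝ) (a0 : Fin m → ℝ) :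
    (¬ ∃ x : Fin r → ℝ, ∀ i, 0 ≤ a0 i + ∑ j, a i j * x j)
      ↔ ∃ (y0 : ℝ) (y : Fin m → ℝ), 0 ≤ y0 ∧ (∀ i, 0 ≤ y i) ∧
          (-1 : ℝ) = y0 + ∑ i, y i * a0 i ∧ ∀ j, (0 : ℝ) = ∑ i, y i * a i j := by
  classical
  let w : Fin (m + 1) → EuclideanSpace ℝ (Fin (r + 1)) :=
    Fin.cons (WithLp.toLp 2 (Fin.cons 1 (fun _ => 0))) (fun i => WithLp.toLp 2 (Fin.cons (a0 i) (a i)))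
  let b : EuclideanSpace ℝ (Fin (r + 1)) := WithLp.toLp 2 (Fin.cons (-1) (fun _ => 0))
  constructor
  · intro hunsat
    by_contra hcert
    have hbmem : b ∉ coneSet w := by
      rintro ⟨c, hc, hbc⟩
      apply hcert
      have hcoord : ∀ k : Fin (r + 1), b k = ∑ j, c j * w j k := by
        intro k
        have h := congrArg (EuclideanSpace.proj k) hbc
        simpa [map_sum, map_smul, PiLp.proj_apply, smul_eq_mul] using h
      refine ⟨c 0, fun i => c i.succ, hc 0, fun i => hc i.succ, ?_, ?_⟩
      · have h0 := hcoord 0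
        simp only [b, w, Fin.cons_zero, Fin.sum_univ_succ, Fin.cons_succ, mul_one] at h0
        exact h0
      · intro j
        have hj := hcoord j.succ
        simp only [b, w, Fin.cons_zero, Fin.sum_univ_succ, Fin.cons_succ, mul_zero,
          zero_add] at hj
        exact hj
    obtain ⟨y, hy1, hy2⟩ := coneSet_separation w hbmem
    have hinner : ∀ u z : EuclideanSpace ℝ (Fin (r + 1)), ⟪u, z⟫_ℝ = ∑ k, u k * z k := by
      intro u z
      simp [PiLp.inner_apply, RCLike.inner_apply, conj_trivial, mul_comm]
    have hy0 : 0 < y 0 := by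
      have := hy2
      rw [hinner] at this
      simp only [b, Fin.sum_univ_succ, Fin.cons_zero, Fin.cons_succ, mul_zero,
        Finset.sum_const_zero, add_zero, mul_neg, mul_one] at this
      linarith
    have hne : y 0 ≠ 0 := ne_of_gt hy0
    apply hunsat
    refine ⟨fun j => y j.succ / y 0, fun i => ?_⟩
    have h := hy1 i.succ
    rw [hinner] at h
    simp only [w, Fin.cons_succ, Fin.sum_univ_succ, Fin.cons_zero] at h
    have hs : ∑ j, a i j * (y j.succ / y 0) = (∑ j, a i j * y j.succ) / y 0 := by
      rw [Finset.sum_div]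
      exact Finset.sum_congr rfl fun j _ => (mul_div_assoc _ _ _).symm
    have heq : a0 i + ∑ j, a i j * (y j.succ / y 0)
        = (a0 i * y 0 + ∑ j, a i j * y j.succ) / y 0 := by
      rw [hs, add_div, mul_div_cancel_right₀ _ hne]
    rw [heq]
    exact div_nonneg h hy0.le
  · rintro ⟨y0, y, hy0, hy, h1, h2⟩ ⟨x, hx⟩
    have key : (0 : ℝ) ≤ ∑ i, y i * (a0 i + ∑ j, a i j * x j) :=
      Finset.sum_nonneg fun i _ => mul_nonneg (hy i) (hx i)
    have expand : ∑ i, y i * (a0 i + ∑ j, a i j * x j)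
        = (∑ i, y i * a0 i) + ∑ j, (∑ i, y i * a i j) * x j := by
      simp only [mul_add, Finset.sum_add_distrib, Finset.mul_sum, Finset.sum_mul]
      congr 1
      rw [Finset.sum_comm]
      exact Finset.sum_congr rfl fun j _ => Finset.sum_congr rfl fun i _ => by ring
    have hz : ∑ j, (∑ i, y i * a i j) * x j = 0 := by
      rw [Finset.sum_congr rfl fun j _ => by rw [← h2 j]]
      simp
    have h1' : ∑ i, y i * a0 i = -1 - y0 := by linarith
    rw [expand, hz, h1'] at key
    linarith
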